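/- Let X be compact, X_1,...,X_N closed subsets, f_i : X_i → X continuous, K_0 = X and K_n = ∪_i f_i(K_{n-1} ∩ X_i) (with the convention f_i(∅) = ∅). Then the sequence (K_n) is a decreasing nested sequence of compact sets, and if each K_n is nonempty, the intersection K = ∩_{n∈ℕ} K_n is nonempty and satisfies K = ∪_{i=1}^N f_i(K ∩ X_i), i.e., K is a local attractor of the local IFS. -/

import Mathlib

/-- For a contractive local IFS on a compact space, the iterates `K₀ = X`,
`Kₙ = ⋃ i, fᵢ(Kₙ₋₁ ∩ Xᵢ)` form a decreasing nested sequence of compact sets, and if each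
`Kₙ` is nonempty then `K = ⋂ₙ Kₙ` is a nonempty local attractor:
`K = ⋃ i, fᵢ(K ∩ Xᵢ)`. -/
theorem local_attractor_as_intersection {X : Type*} [MetricSpace X] [CompactSpace X]
    (N : ℕ) (Xs : Fin N → Set X) (hXs : ∀ i, IsClosed (Xs i))
    (f : Fin N → X → X) (hf : ∀ i, ContinuousOn (f i) (Xs i))
    (s : ℝ) (hs0 : 0 ≤ s) (hs1 : s < 1)
    (hcontr : ∀ i, ∀ x ∈ Xs i, ∀ y ∈ Xs i, dist (f i x) (f i y) ≤ s * dist x y)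
    (K : ℕ → Set X) (hK0 : K 0 = Set.univ)
    (hK : ∀ n, K (n + 1) = ⋃ i, f i '' (K n ∩ Xs i)) :
    (∀ n, IsCompact (K n)) ∧ (∀ m n, m ≤ n → K n ⊆ K m) ∧
      ((∀ n, (K n).Nonempty) →
        (⋂ n, K n).Nonempty ∧ (⋂ n, K n) = ⋃ i, f i '' ((⋂ n, K n) ∩ Xs i)) := by
  have hcpt : ∀ n, IsCompact (K n) := by
    intro n
    induction n with
    | zero => rw [hK0]; exact isCompact_univ
    | succ n ih =>
      rw [hK n]
      exact isCompact_iUnion fun i =>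
        (ih.inter_right (hXs i)).image_of_continuousOn ((hf i).mono Set.inter_subset_right)
  have hstep : ∀ n, K (n + 1) ⊆ K n := by
    intro n
    induction n with
    | zero => rw [hK0]; exact Set.subset_univ _
    | succ n ih =>
      calc K (n + 2) = ⋃ i, f i '' (K (n + 1) ∩ Xs i) := hK (n + 1)
        _ ⊆ ⋃ i, f i '' (K n ∩ Xs i) :=
            Set.iUnion_mono fun i => Set.image_mono (Set.inter_subset_inter_left _ ih)
        _ = K (n + 1) := (hK n).symm
  have hanti : Antitone K := antitone_nat_of_succ_le hstep
  refine ⟨hcpt, fun m n h => hanti h, ?_⟩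
  intro hne
  have hKinter : (⋂ n, K n).Nonempty :=
    IsCompact.nonempty_iInter_of_sequence_nonempty_isCompact_isClosed K hstep hne (hcpt 0)
      (fun n => (hcpt n).isClosed)
  refine ⟨hKinter, Set.Subset.antisymm ?_ ?_⟩
  · intro x hx
    have hxK : ∀ n, x ∈ K n := Set.mem_iInter.1 hx
    set C : Fin N → ℕ → Set X := fun i n => K n ∩ (Xs i ∩ f i ⁻¹' {x}) with hCdef
    have hAux : ∀ i, IsClosed (Xs i ∩ f i ⁻¹' {x}) := fun i =>
      (hf i).preimage_isClosed_of_isClosed (hXs i) isClosed_singleton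
    have hCcpt : ∀ i n, IsCompact (C i n) := fun i n => (hcpt n).inter_right (hAux i)
    have hCanti : ∀ i n, C i (n + 1) ⊆ C i n := fun i n =>
      Set.inter_subset_inter_left _ (hstep n)
    have hCanti' : ∀ i, Antitone (C i) := fun i => antitone_nat_of_succ_le (hCanti i)
    have hmem : ∀ n, ∃ i, (C i n).Nonempty := by
      intro n
      have := hxK (n + 1)
      rw [hK n] at this
      obtain ⟨i, y, hy, hfy⟩ := Set.mem_iUnion.1 this
      exact ⟨i, y, hy.1, hy.2, hfy⟩
    have key : ∃ i, ∀ n, (C i n).Nonempty := by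
      by_contra h
      push_neg at h
      choose g hg using h
      set M := Finset.univ.sup g with hM
      obtain ⟨i, z, hz⟩ := hmem M
      have hz' := hCanti' i (Finset.le_sup (Finset.mem_univ i)) hz
      rw [hg i] at hz'
      exact hz'
    obtain ⟨i, hi⟩ := key
    have : (⋂ n, C i n).Nonempty :=
      IsCompact.nonempty_iInter_of_sequence_nonempty_isCompact_isClosed (C i)
        (hCanti i) hi (hCcpt i 0) (fun n => (hCcpt i n).isClosed)
    obtain ⟨y, hy⟩ := this
    have hy' := Set.mem_iInter.1 hy
    refine Set.mem_iUnion.2 ⟨i, y, ⟨Set.mem_iInter.2 fun n => (hy' n).1, (hy' 0).2.1⟩, ?_⟩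
    exact (hy' 0).2.2
  · intro x hx
    obtain ⟨i, y, hy, hfy⟩ := Set.mem_iUnion.1 hx
    refine Set.mem_iInter.2 fun m => ?_
    cases m with
    | zero => rw [hK0]; trivial
    | succ m =>
      rw [hK m]
      exact Set.mem_iUnion.2 ⟨i, y, ⟨Set.mem_iInter.1 hy.1 m, hy.2⟩, hfy⟩
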